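/- Let h : [0,∞) → ℝ be of bounded variation on compact subintervals with h(x) = 0 at a fixed point x > 0, and suppose K : [0, x] → [0,1] satisfies K(t) ≤ A/(x−t)^2 for 0 ≤ t ≤ x − x/√n (with A > 0, n ≥ 1). Then |∫_0^x K(t) h(t) dt| ≤ (A/x) ∑_{k=1}^{⌊√n⌋} V_{x−x/k}^x(h) + (x/√n) V_{x−x/√n}^x(h), where V_a^b(h) denotes the total variation of h on [a,b]. -/

import Mathlib

open MeasureTheory

/-- Total variation of `h` on `[a, b]` (as a real number). -/
noncomputable def totalVar (h : ℝ → ℝ) (a b : ℝ) : ℝ :=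
  (eVariationOn h (Set.Icc a b)).toReal

lemma totalVar_nonneg (h : ℝ → ℝ) (a b : ℝ) : 0 ≤ totalVar h a b :=
  ENNReal.toReal_nonneg

lemma totalVar_mono (h : ℝ → ℝ) {a a' b : ℝ} (haa : a ≤ a')
    (hfin : eVariationOn h (Set.Icc a b) ≠ ⊤) : totalVar h a' b ≤ totalVar h a b :=
  ENNReal.toReal_mono hfin (eVariationOn.mono h (Set.Icc_subset_Icc_left haa))

lemma abs_le_totalVar (h : ℝ → ℝ) {t x : ℝ} (ht : t ≤ x)
    (hfin : eVariationOn h (Set.Icc t x) ≠ ⊤) (hhx : h x = 0) :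
    |h t| ≤ totalVar h t x := by
  have h1 : edist (h t) (h x) ≤ eVariationOn h (Set.Icc t x) :=
    eVariationOn.edist_le h ⟨le_refl t, ht⟩ ⟨ht, le_refl x⟩
  have h2 := ENNReal.toReal_mono hfin h1
  rwa [edist_dist, ENNReal.toReal_ofReal dist_nonneg, Real.dist_eq, hhx, sub_zero] at h2

lemma integral_inv_sq_aux {x b e : ℝ} (hbe : b ≤ e) (hex : e < x) :
    ∫ t in b..e, ((x - t) ^ 2)⁻¹ = (x - e)⁻¹ - (x - b)⁻¹ := by
  have hderiv : ∀ t ∈ Set.uIcc b e, HasDerivAt (fun u => (x - u)⁻¹) (((x - t) ^ 2)⁻¹) t := by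
    intro t ht
    rw [Set.uIcc_of_le hbe] at ht
    have hxt : x - t ≠ 0 := by have := ht.2; intro hc; nlinarith
    have h1 : HasDerivAt (fun u : ℝ => x - u) (-1) t := by
      simpa using (hasDerivAt_id t).const_sub x
    have h2 := h1.inv hxt
    rw [neg_neg, one_div] at h2
    exact h2
  have hcont : ContinuousOn (fun t => ((x - t) ^ 2)⁻¹) (Set.uIcc b e) := by
    apply ContinuousOn.inv₀
    · fun_prop
    · intro t ht
      rw [Set.uIcc_of_le hbe] at ht
      have h4 : 0 < x - t := by linarith [ht.2]
      positivity
  rw [intervalIntegral.integral_eq_sub_of_hasDerivAt hderiv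
    (hcont.intervalIntegrable)]

theorem stmt_19 (h : ℝ → ℝ) (x A : ℝ) (n : ℕ) (hx : 0 < x) (hA : 0 < A)
    (hn : 1 ≤ n)
    (hBV : ∀ a b : ℝ, 0 ≤ a → a ≤ b → eVariationOn h (Set.Icc a b) ≠ ⊤)
    (hhx : h x = 0)
    (K : ℝ → ℝ)
    (hK0 : ∀ t : ℝ, 0 ≤ t → t ≤ x → 0 ≤ K t)
    (hK1 : ∀ t : ℝ, 0 ≤ t → t ≤ x → K t ≤ 1)
    (hKdecay : ∀ t : ℝ, 0 ≤ t → t ≤ x - x / Real.sqrt n → K t ≤ A / (x - t) ^ 2)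
    (hInt : IntervalIntegrable (fun t => K t * h t) volume 0 x) :
    |∫ t in (0 : ℝ)..x, K t * h t| ≤
      (A / x) * ∑ k ∈ Finset.Icc 1 ⌊Real.sqrt n⌋₊, totalVar h (x - x / k) x +
        (x / Real.sqrt n) * totalVar h (x - x / Real.sqrt n) x := by
  set s : ℝ := Real.sqrt n with hs_def
  have hs1 : (1 : ℝ) ≤ s := by
    rw [hs_def, Real.one_le_sqrt]
    exact_mod_cast hn
  have hs0 : (0 : ℝ) < s := lt_of_lt_of_le one_pos hs1
  set m : ℕ := ⌊s⌋₊ with hm_def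
  have hm1 : 1 ≤ m := Nat.le_floor (by exact_mod_cast hs1)
  have hms : (m : ℝ) ≤ s := Nat.floor_le hs0.le
  have hsm : s < m + 1 := Nat.lt_floor_add_one s
  set y : ℝ := x - x / s with hy_def
  have hy0 : 0 ≤ y := by
    have : x / s ≤ x := div_le_self hx.le hs1
    simp [hy_def]; linarith
  have hyx : y < x := by
    have : 0 < x / s := div_pos hx hs0
    simp [hy_def]; linarith
  -- the partition points
  set c : ℕ → ℝ := fun i => min ((i : ℝ) + 1) s with hc_def
  have hc1 : ∀ i, (1 : ℝ) ≤ c i := fun i =>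
    le_min (by have := Nat.cast_nonneg (α := ℝ) i; linarith) hs1
  have hc0 : ∀ i, (0 : ℝ) < c i := fun i => lt_of_lt_of_le one_pos (hc1 i)
  have hcs : ∀ i, c i ≤ s := fun i => min_le_right _ _
  have hcmono : ∀ i, c i ≤ c (i + 1) := by
    intro i
    apply min_le_min _ le_rfl
    push_cast; linarith
  have hcstep : ∀ i, c (i + 1) ≤ c i + 1 := by
    intro i
    have : min ((i : ℝ) + 1 + 1) (s + 1) = min ((i : ℝ) + 1) s + 1 := by
      rw [min_add_add_right]
    simp only [hc_def]
    push_cast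
    rw [← this]
    exact min_le_min le_rfl (by linarith)
  have hceq : ∀ i, i < m → c i = (i : ℝ) + 1 := by
    intro i hi
    apply min_eq_left
    have : (i : ℝ) + 1 ≤ (m : ℝ) := by exact_mod_cast hi
    linarith
  have hcm : c m = s := by
    apply min_eq_right
    push_cast; linarith
  set a : ℕ → ℝ := fun i => x - x / c i with ha_def
  have ha0 : a 0 = 0 := by
    simp only [ha_def, hc_def, Nat.cast_zero, zero_add, min_eq_left hs1, div_one, sub_self]
  have ham : a m = y := by simp [ha_def, hcm, hy_def]
  have haley : ∀ i, a i ≤ y := by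
    intro i
    have : x / s ≤ x / c i := div_le_div_of_nonneg_left hx.le (hc0 i) (hcs i)
    simp only [ha_def, hy_def]; linarith
  have ha_nonneg : ∀ i, 0 ≤ a i := by
    intro i
    have : x / c i ≤ x := div_le_self hx.le (hc1 i)
    simp only [ha_def]; linarith
  have hamono : ∀ i, a i ≤ a (i + 1) := by
    intro i
    have : x / c (i + 1) ≤ x / c i :=
      div_le_div_of_nonneg_left hx.le (hc0 i) (hcmono i)
    simp only [ha_def]; linarith
  have halex : ∀ i, a i ≤ x := fun i => (haley i).trans hyx.le
  -- pointwise bound on |h|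
  have hhbound : ∀ t a' : ℝ, 0 ≤ a' → a' ≤ t → t ≤ x → |h t| ≤ totalVar h a' x := by
    intro t a' h0 h1 h2
    calc |h t| ≤ totalVar h t x :=
          abs_le_totalVar h h2 (hBV t x (h0.trans h1) h2) hhx
      _ ≤ totalVar h a' x := totalVar_mono h h1 (hBV a' x h0 (h1.trans h2))
  -- integrability on subintervals of [0, x]
  have hIntSub : ∀ p q : ℝ, 0 ≤ p → q ≤ x → 0 ≤ q → p ≤ x →
      IntervalIntegrable (fun t => K t * h t) volume p q := by
    intro p q hp hq hq' hp'
    apply hInt.mono_set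
    rw [Set.uIcc_of_le hx.le]
    exact Set.uIcc_subset_Icc ⟨hp, hp'⟩ ⟨hq', hq⟩
  have hpiece : ∀ i, IntervalIntegrable (fun t => K t * h t) volume (a i) (a (i + 1)) :=
    fun i => hIntSub _ _ (ha_nonneg i) (halex (i + 1)) (ha_nonneg (i + 1)) (halex i)
  -- per-piece bound
  have hbound : ∀ i, i < m →
      |∫ t in a i..a (i + 1), K t * h t| ≤ (A / x) * totalVar h (a i) x := by
    intro i hi
    set V : ℝ := totalVar h (a i) x with hV_def
    have hV0 : 0 ≤ V := totalVar_nonneg _ _ _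
    have hgcont : ContinuousOn (fun t => A * V * ((x - t) ^ 2)⁻¹)
        (Set.uIcc (a i) (a (i + 1))) := by
      apply ContinuousOn.mul continuousOn_const
      apply ContinuousOn.inv₀
      · fun_prop
      · intro t ht
        rw [Set.uIcc_of_le (hamono i)] at ht
        have ht2 : t ≤ y := ht.2.trans (haley (i + 1))
        have h5 : 0 < x - t := by have := lt_of_le_of_lt ht2 hyx; linarith
        positivity
    have hgint : IntervalIntegrable (fun t => A * V * ((x - t) ^ 2)⁻¹) volume
        (a i) (a (i + 1)) := hgcont.intervalIntegrable
    have hpt : ∀ t ∈ Set.uIoc (a i) (a (i + 1)),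
        ‖K t * h t‖ ≤ A * V * ((x - t) ^ 2)⁻¹ := by
      intro t ht
      rw [Set.uIoc_of_le (hamono i)] at ht
      have ht0 : 0 ≤ t := (ha_nonneg i).trans ht.1.le
      have hty : t ≤ y := ht.2.trans (haley (i + 1))
      have htx : t < x := lt_of_le_of_lt hty hyx
      have hKt : K t ≤ A / (x - t) ^ 2 := hKdecay t ht0 hty
      have hKt0 : 0 ≤ K t := hK0 t ht0 htx.le
      have hht : |h t| ≤ V := hhbound t (a i) (ha_nonneg i) ht.1.le htx.le
      have hAd0 : (0 : ℝ) ≤ A / (x - t) ^ 2 := by positivity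
      calc ‖K t * h t‖ = K t * |h t| := by
            rw [Real.norm_eq_abs, abs_mul, abs_of_nonneg hKt0]
        _ ≤ (A / (x - t) ^ 2) * V := mul_le_mul hKt hht (abs_nonneg _) hAd0
        _ = A * V * ((x - t) ^ 2)⁻¹ := by ring
    have hIval : ∫ t in a i..a (i + 1), A * V * ((x - t) ^ 2)⁻¹
        = A * V * ((x - a (i + 1))⁻¹ - (x - a i)⁻¹) := by
      rw [intervalIntegral.integral_const_mul,
        integral_inv_sq_aux (hamono i) (lt_of_le_of_lt (haley (i + 1)) hyx)]
    have hinv : ∀ j, (x - a j)⁻¹ = c j / x := by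
      intro j
      simp only [ha_def]
      rw [sub_sub_cancel, inv_div]
    have hIval2 : ∫ t in a i..a (i + 1), A * V * ((x - t) ^ 2)⁻¹
        = A * V * ((c (i + 1) - c i) / x) := by
      rw [hIval, hinv, hinv]; ring
    have hInonneg : (0 : ℝ) ≤ A * V * ((c (i + 1) - c i) / x) := by
      have := hcmono i
      have hd : 0 ≤ (c (i + 1) - c i) / x := by
        apply div_nonneg (by linarith) hx.le
      positivity
    calc |∫ t in a i..a (i + 1), K t * h t|
        ≤ |∫ t in a i..a (i + 1), A * V * ((x - t) ^ 2)⁻¹| :=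
          intervalIntegral.norm_integral_le_abs_of_norm_le
            ((ae_restrict_iff' measurableSet_uIoc).mpr
              (Filter.Eventually.of_forall hpt)) hgint
      _ = A * V * ((c (i + 1) - c i) / x) := by
          rw [hIval2, abs_of_nonneg hInonneg]
      _ ≤ A * V * (1 / x) := by
          apply mul_le_mul_of_nonneg_left _ (mul_nonneg hA.le hV0)
          exact (div_le_div_iff_of_pos_right hx).mpr (by have := hcstep i; linarith)
      _ = (A / x) * V := by ring
  -- decompose the integral
  have hsplit : ∫ t in (0 : ℝ)..x, K t * h t =
      (∫ t in (0 : ℝ)..y, K t * h t) + ∫ t in y..x, K t * h t := by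
    rw [intervalIntegral.integral_add_adjacent_intervals
      (hIntSub 0 y le_rfl hyx.le hy0 hx.le) (hIntSub y x hy0 le_rfl hx.le hyx.le)]
  have hsum : ∑ i ∈ Finset.range m, ∫ t in a i..a (i + 1), K t * h t
      = ∫ t in (0 : ℝ)..y, K t * h t := by
    have := intervalIntegral.sum_integral_adjacent_intervals
      (f := fun t => K t * h t) (μ := volume) (a := a) (n := m)
      (fun k _ => hpiece k)
    rw [this, ha0, ham]
  -- bound near x
  have htail : |∫ t in y..x, K t * h t| ≤ (x / s) * totalVar h y x := by
    have hb : ∀ t ∈ Set.uIoc y x, ‖K t * h t‖ ≤ totalVar h y x := by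
      intro t ht
      rw [Set.uIoc_of_le hyx.le] at ht
      have ht0 : 0 ≤ t := hy0.trans ht.1.le
      have hK1t : K t ≤ 1 := hK1 t ht0 ht.2
      have hK0t : 0 ≤ K t := hK0 t ht0 ht.2
      have hht : |h t| ≤ totalVar h y x := hhbound t y hy0 ht.1.le ht.2
      calc ‖K t * h t‖ = K t * |h t| := by
            rw [Real.norm_eq_abs, abs_mul, abs_of_nonneg hK0t]
        _ ≤ 1 * (totalVar h y x) := mul_le_mul hK1t hht (abs_nonneg _) one_pos.le
        _ = totalVar h y x := one_mul _
    have := intervalIntegral.norm_integral_le_of_norm_le_const hb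
    rw [Real.norm_eq_abs] at this
    have hxy : |x - y| = x / s := by
      rw [abs_of_nonneg (by linarith)]
      simp [hy_def]
    rw [hxy] at this
    linarith [this]
  -- bound away from x
  have hmain : |∫ t in (0 : ℝ)..y, K t * h t| ≤
      (A / x) * ∑ k ∈ Finset.Icc 1 m, totalVar h (x - x / k) x := by
    rw [← hsum]
    calc |∑ i ∈ Finset.range m, ∫ t in a i..a (i + 1), K t * h t|
        ≤ ∑ i ∈ Finset.range m, |∫ t in a i..a (i + 1), K t * h t| :=
          Finset.abs_sum_le_sum_abs _ _
      _ ≤ ∑ i ∈ Finset.range m, (A / x) * totalVar h (a i) x :=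
          Finset.sum_le_sum fun i hi => hbound i (Finset.mem_range.mp hi)
      _ = (A / x) * ∑ i ∈ Finset.range m, totalVar h (a i) x := by
          rw [Finset.mul_sum]
      _ = (A / x) * ∑ k ∈ Finset.Icc 1 m, totalVar h (x - x / k) x := by
          congr 1
          rw [← Finset.Ico_add_one_right_eq_Icc, Finset.sum_Ico_eq_sum_range]
          apply Finset.sum_congr (by simp)
          intro i hi
          rw [Finset.mem_range] at hi
          have hilt : i < m := by omega
          simp only [ha_def, hceq i hilt]
          push_cast
          ring_nf
  calc |∫ t in (0 : ℝ)..x, K t * h t|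
      ≤ |∫ t in (0 : ℝ)..y, K t * h t| + |∫ t in y..x, K t * h t| := by
        rw [hsplit]; exact abs_add_le _ _
    _ ≤ (A / x) * ∑ k ∈ Finset.Icc 1 m, totalVar h (x - x / k) x
        + (x / s) * totalVar h y x := add_le_add hmain htail
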